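/- Let W be a standard Brownian motion indexed by [0, T] on a probability space (Ω, F, P), let r ∈ ℝ, σ₀ > 0, 0 ≤ t < T, and define the random variable H := (1/T) ∫₀^T exp((r − σ₀²/2)(u − t) + σ₀ (W_u − W_t)) du. Let φ : ℝ → ℝ be twice continuously differentiable with |φ(z)| + |φ'(z)| + |φ''(z)| ≤ K(1 + |z|^m) for all z and some constants K ≥ 0, m ≥ 0. Then the function V₀(x) := e^{−r(T−t)} E[φ(xH)] is twice differentiable on (0, ∞) with V₀''(x) = e^{−r(T−t)} E[φ''(xH) H²], and there exists a constant K₃ ≥ 0 (depending on K, m, r, σ₀, t, T) such that |V₀''(x)| ≤ K₃(1 + x^m) for all x > 0. -/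

import Mathlib

open MeasureTheory ProbabilityTheory

open Real Filter
open scoped NNReal ENNReal

/-- A standard Brownian motion indexed by `[0, T]` on a probability space `(Ω, F, P)`:
`W 0 = 0` a.s., independent increments, Gaussian increments `W v − W u ∼ N(0, v − u)`,
and a.s. continuous sample paths. -/
structure IsStandardBrownianMotion {Ω : Type*} [MeasurableSpace Ω]
    (P : Measure Ω) (T : ℝ) (W : ℝ → Ω → ℝ) : Prop where
  measurable : ∀ u ∈ Set.Icc (0 : ℝ) T, Measurable (W u)
  init : ∀ᵐ ω ∂P, W 0 ω = 0
  indep_increments : ∀ (n : ℕ) (t : Fin (n + 1) → ℝ), Monotone t →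
    (∀ i, t i ∈ Set.Icc (0 : ℝ) T) →
    iIndepFun
      (fun i : Fin n => fun ω => W (t i.succ) ω - W (t i.castSucc) ω) P
  gaussian_increments : ∀ u v : ℝ, 0 ≤ u → u ≤ v → v ≤ T →
    Measure.map (fun ω => W v ω - W u ω) P = gaussianReal 0 (Real.toNNReal (v - u))
  continuous_paths : ∀ᵐ ω ∂P, ContinuousOn (fun u => W u ω) (Set.Icc 0 T)

lemma gauss_exp_lintegral (l : ℝ) (v : ℝ≥0) :
    ∫⁻ y, ENNReal.ofReal (Real.exp (l * y)) ∂(gaussianReal 0 v)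
      = ENNReal.ofReal (Real.exp (l ^ 2 * v / 2)) := by
  rcases eq_or_ne v 0 with rfl | hv
  · rw [gaussianReal_zero_var, lintegral_dirac' _ (by fun_prop)]
    simp
  · rw [gaussianReal_of_var_ne_zero _ hv,
      lintegral_withDensity_eq_lintegral_mul _ (measurable_gaussianPDF _ _)
        (by fun_prop)]
    have key : ∀ y : ℝ, gaussianPDF 0 v y * ENNReal.ofReal (Real.exp (l * y))
        = ENNReal.ofReal (Real.exp (l ^ 2 * v / 2)) * gaussianPDF (l * v) v y := by
      intro y
      rw [gaussianPDF_def, gaussianPDF_def, ← ENNReal.ofReal_mul (gaussianPDFReal_nonneg _ _ _),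
        ← ENNReal.ofReal_mul (Real.exp_nonneg _)]
      congr 1
      unfold gaussianPDFReal
      have hv' : (v : ℝ) ≠ 0 := by exact_mod_cast hv
      rw [mul_assoc, ← Real.exp_add, mul_left_comm, ← Real.exp_add]
      congr 2
      field_simp
      ring
    simp_rw [Pi.mul_apply, key]
    rw [lintegral_const_mul _ (measurable_gaussianPDF _ _), lintegral_gaussianPDF_eq_one _ hv,
      mul_one]

lemma riemann_sum_tendsto {T : ℝ} (hT : 0 < T) {f : ℝ → ℝ}
    (hf : ContinuousOn f (Set.Icc 0 T)) :
    Tendsto (fun k : ℕ => (∑ i ∈ Finset.range (k + 1), f (i * T / (k + 1))) / (k + 1))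
      atTop (nhds ((1 / T) * ∫ u in (0:ℝ)..T, f u)) := by
  have hT' : T ≠ 0 := hT.ne'
  have key : Tendsto (fun k : ℕ =>
      (T / (k + 1)) * ∑ i ∈ Finset.range (k + 1), f (i * T / (k + 1)))
      atTop (nhds (∫ u in (0:ℝ)..T, f u)) := by
    rw [Metric.tendsto_atTop]
    intro ε hε
    obtain ⟨δ, hδ, hδ'⟩ := Metric.uniformContinuousOn_iff.1
      (isCompact_Icc.uniformContinuousOn_of_continuous hf) (ε / (2 * T)) (by positivity)
    refine ⟨⌈T / δ⌉₊, fun k hk => ?_⟩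
    have hn : (0:ℝ) < (k:ℝ) + 1 := by positivity
    set h : ℝ := T / (k + 1) with hh
    have hh0 : 0 < h := by positivity
    have hhδ : h < δ := by
      rw [hh, div_lt_iff₀ hn]
      have h1 : T / δ ≤ (⌈T / δ⌉₊ : ℝ) := Nat.le_ceil _
      have h2 : (⌈T / δ⌉₊ : ℝ) ≤ (k : ℝ) := by exact_mod_cast hk
      have : T / δ < (k:ℝ) + 1 := by linarith
      calc T = δ * (T / δ) := by field_simp
        _ < δ * ((k:ℝ) + 1) := by exact mul_lt_mul_of_pos_left this hδ
    set a : ℕ → ℝ := fun i => i * h with ha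
    have ha_mono : ∀ i : ℕ, a i ≤ a (i + 1) := by
      intro i
      simp only [ha]
      have : (i:ℝ) ≤ (i:ℝ) + 1 := by linarith
      push_cast
      nlinarith
    have ha_mem : ∀ i : ℕ, i ≤ k + 1 → a i ∈ Set.Icc (0:ℝ) T := by
      intro i hi
      have hi' : (i : ℝ) ≤ (k:ℝ) + 1 := by exact_mod_cast hi
      constructor
      · positivity
      · calc (i:ℝ) * h ≤ ((k:ℝ) + 1) * h := by nlinarith
          _ = T := by rw [hh]; field_simp
    have haT : a (k + 1) = T := by
      simp only [ha, hh]; push_cast; field_simp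
    have ha0 : a 0 = 0 := by simp [ha]
    have hsub : ∀ i : ℕ, i < k + 1 → Set.uIcc (a i) (a (i + 1)) ⊆ Set.Icc (0:ℝ) T := by
      intro i hi
      rw [Set.uIcc_of_le (ha_mono i)]
      exact Set.Icc_subset_Icc ((ha_mem i hi.le).1) ((ha_mem (i+1) hi).2)
    have hint : ∀ i : ℕ, i < k + 1 → IntervalIntegrable f volume (a i) (a (i + 1)) :=
      fun i hi => (hf.mono (hsub i hi)).intervalIntegrable
    have hsum : ∑ i ∈ Finset.range (k + 1), ∫ u in a i..a (i + 1), f u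
        = ∫ u in (0:ℝ)..T, f u := by
      rw [intervalIntegral.sum_integral_adjacent_intervals hint, ha0, haT]
    have hdiff : (a (k+1) : ℝ) = T := haT
    have hstep : ∀ i : ℕ, a (i + 1) - a i = h := by
      intro i; simp only [ha]; push_cast; ring
    have heach : ∀ i ∈ Finset.range (k + 1),
        ‖h * f (a i) - ∫ u in a i..a (i + 1), f u‖ ≤ ε / (2 * T) * h := by
      intro i hi
      rw [Finset.mem_range] at hi
      have hconst : ∫ _ in a i..a (i + 1), f (a i) = h * f (a i) := by
        rw [intervalIntegral.integral_const, hstep i, smul_eq_mul]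
      rw [← hconst, ← intervalIntegral.integral_sub (by
          exact intervalIntegrable_const) (hint i hi)]
      have := intervalIntegral.norm_integral_le_of_norm_le_const
        (C := ε / (2 * T)) (f := fun u => f (a i) - f u) (a := a i) (b := a (i+1)) ?_
      · calc _ ≤ ε / (2 * T) * |a (i+1) - a i| := this
          _ = ε / (2 * T) * h := by rw [hstep i, abs_of_pos hh0]
      · intro x hx
        rw [Set.uIoc_of_le (ha_mono i)] at hx
        have hx1 : x ∈ Set.Icc (0:ℝ) T := by
          constructor
          · exact le_trans (ha_mem i hi.le).1 hx.1.le
          · exact le_trans hx.2 (ha_mem (i+1) hi).2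
        have hdist : dist (a i) x < δ := by
          rw [Real.dist_eq, abs_of_nonpos (by linarith [hx.1.le])]
          have : x ≤ a i + h := by rw [← hstep i] at *; linarith [hx.2]
          linarith
        have := hδ' (a i) (ha_mem i hi.le) x hx1 hdist
        rw [Real.dist_eq] at this
        exact this.le
    have hcalc : dist ((T / ((k:ℝ) + 1)) * ∑ i ∈ Finset.range (k + 1), f ((i:ℝ) * T / ((k:ℝ) + 1)))
        (∫ u in (0:ℝ)..T, f u) ≤ ε / 2 := by
      have hpt : ∀ i : ℕ, (i:ℝ) * T / ((k:ℝ) + 1) = a i := by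
        intro i; simp only [ha, hh]; ring
      rw [Real.dist_eq, ← hsum, Finset.mul_sum]
      have : ∑ i ∈ Finset.range (k + 1), (T / ((k:ℝ)+1)) * f ((i:ℝ) * T / ((k:ℝ) + 1))
          - ∑ i ∈ Finset.range (k + 1), ∫ u in a i..a (i + 1), f u
          = ∑ i ∈ Finset.range (k + 1), (h * f (a i) - ∫ u in a i..a (i + 1), f u) := by
        rw [Finset.sum_sub_distrib]
        congr 1
        exact Finset.sum_congr rfl fun i _ => by rw [hpt i, hh]
      rw [this]
      calc |∑ i ∈ Finset.range (k + 1), (h * f (a i) - ∫ u in a i..a (i + 1), f u)|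
          ≤ ∑ i ∈ Finset.range (k + 1), ‖h * f (a i) - ∫ u in a i..a (i + 1), f u‖ := by
            exact Finset.abs_sum_le_sum_abs _ _
        _ ≤ ∑ _i ∈ Finset.range (k + 1), ε / (2 * T) * h := Finset.sum_le_sum heach
        _ = ((k:ℝ) + 1) * (ε / (2 * T) * h) := by
            rw [Finset.sum_const, Finset.card_range]; push_cast; ring
        _ = ε / 2 := by rw [hh]; field_simp
    exact lt_of_le_of_lt hcalc (by linarith)
  have h2 := key.const_mul (1 / T)

  refine h2.congr fun k => ?_
  field_simp

lemma increment_exp_lintegral_le {Ω : Type*} [MeasurableSpace Ω] (P : Measure Ω)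
    [IsProbabilityMeasure P] {T t : ℝ} (ht : 0 ≤ t) (htT : t ≤ T) {W : ℝ → Ω → ℝ}
    (hWmeas : ∀ u ∈ Set.Icc (0 : ℝ) T, Measurable (W u))
    (hgauss : ∀ u v : ℝ, 0 ≤ u → u ≤ v → v ≤ T →
      Measure.map (fun ω => W v ω - W u ω) P = gaussianReal 0 (Real.toNNReal (v - u)))
    (l : ℝ) {s : ℝ} (hs : s ∈ Set.Icc (0 : ℝ) T) :
    ∫⁻ ω, ENNReal.ofReal (Real.exp (l * (W s ω - W t ω))) ∂P
      ≤ ENNReal.ofReal (Real.exp (l ^ 2 * T / 2)) := by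
  have htm : t ∈ Set.Icc (0 : ℝ) T := ⟨ht, htT⟩
  have hfin : ∀ (Z : Ω → ℝ) (c : ℝ) (d : ℝ), Measurable Z → 0 ≤ d → d ≤ T →
      Measure.map Z P = gaussianReal 0 (Real.toNNReal d) →
      ∫⁻ ω, ENNReal.ofReal (Real.exp (c * Z ω)) ∂P
        ≤ ENNReal.ofReal (Real.exp (l ^ 2 * T / 2)) → True := fun _ _ _ _ _ _ _ _ => trivial
  rcases le_total t s with h | h
  · have hmap := hgauss t s ht h hs.2
    have hZ : Measurable fun ω => W s ω - W t ω := (hWmeas s hs).sub (hWmeas t htm)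
    have : ∫⁻ ω, ENNReal.ofReal (Real.exp (l * (W s ω - W t ω))) ∂P
        = ∫⁻ y, ENNReal.ofReal (Real.exp (l * y)) ∂(gaussianReal 0 (Real.toNNReal (s - t))) := by
      rw [← hmap, lintegral_map (by fun_prop) hZ]
    rw [this, gauss_exp_lintegral]
    apply ENNReal.ofReal_le_ofReal
    apply Real.exp_le_exp.2
    have h1 : ((Real.toNNReal (s - t) : ℝ≥0) : ℝ) = s - t := Real.coe_toNNReal _ (by linarith)
    rw [h1]
    have : s - t ≤ T := by linarith [hs.2]
    nlinarith [sq_nonneg l]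
  · have hmap := hgauss s t hs.1 h htT
    have hZ : Measurable fun ω => W t ω - W s ω := (hWmeas t htm).sub (hWmeas s hs)
    have hrw : ∀ ω, Real.exp (l * (W s ω - W t ω)) = Real.exp ((-l) * (W t ω - W s ω)) := by
      intro ω; ring_nf
    simp_rw [hrw]
    have : ∫⁻ ω, ENNReal.ofReal (Real.exp ((-l) * (W t ω - W s ω))) ∂P
        = ∫⁻ y, ENNReal.ofReal (Real.exp ((-l) * y)) ∂(gaussianReal 0 (Real.toNNReal (t - s))) := by
      rw [← hmap, lintegral_map (by fun_prop) hZ]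
    rw [this, gauss_exp_lintegral]
    apply ENNReal.ofReal_le_ofReal
    apply Real.exp_le_exp.2
    have h1 : ((Real.toNNReal (t - s) : ℝ≥0) : ℝ) = t - s := Real.coe_toNNReal _ (by linarith)
    rw [h1, neg_pow]
    have : t - s ≤ T := by linarith [hs.1]
    nlinarith [sq_nonneg l]

lemma H_props {Ω : Type*} [MeasurableSpace Ω] (P : Measure Ω) [IsProbabilityMeasure P]
    (T t σ₀ a : ℝ) (ht : 0 ≤ t) (htT : t < T) (W : ℝ → Ω → ℝ)
    (hWmeas : ∀ u ∈ Set.Icc (0 : ℝ) T, Measurable (W u))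
    (hcont : ∀ᵐ ω ∂P, ContinuousOn (fun u => W u ω) (Set.Icc 0 T))
    (hgauss : ∀ u v : ℝ, 0 ≤ u → u ≤ v → v ≤ T →
      Measure.map (fun ω => W v ω - W u ω) P = gaussianReal 0 (Real.toNNReal (v - u)))
    (H : Ω → ℝ)
    (hH : H = fun ω => (1 / T) * ∫ u in (0 : ℝ)..T,
      Real.exp (a * (u - t) + σ₀ * (W u ω - W t ω))) :
    AEStronglyMeasurable H P ∧ (∀ ω, 0 ≤ H ω) ∧
      ∀ n : ℕ, Integrable (fun ω => (1 + H ω) ^ n) P := by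
  have hT : 0 < T := lt_of_le_of_lt ht htT
  have htm : t ∈ Set.Icc (0:ℝ) T := ⟨ht, htT.le⟩
  set g : ℝ → Ω → ℝ := fun s ω => Real.exp (a * (s - t) + σ₀ * (W s ω - W t ω)) with hg
  have gmeas : ∀ s ∈ Set.Icc (0:ℝ) T, Measurable (g s) := by
    intro s hs
    apply Real.measurable_exp.comp
    exact measurable_const.add (((hWmeas s hs).sub (hWmeas t htm)).const_mul σ₀)
  -- the Riemann sum approximations
  set Hk : ℕ → Ω → ℝ := fun k ω =>
    (∑ i ∈ Finset.range (k + 1), g ((i : ℝ) * T / ((k : ℝ) + 1)) ω) / ((k : ℝ) + 1) with hHk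
  have hmem : ∀ k i : ℕ, i < k + 1 → ((i : ℝ) * T / ((k : ℝ) + 1)) ∈ Set.Icc (0:ℝ) T := by
    intro k i hi
    have hi' : (i : ℝ) ≤ (k : ℝ) + 1 := by exact_mod_cast Nat.le_of_lt_succ hi |>.trans (Nat.le_succ k)
    have hk1 : (0:ℝ) < (k:ℝ) + 1 := by positivity
    constructor
    · positivity
    · rw [div_le_iff₀ hk1]; nlinarith
  have Hkmeas : ∀ k, Measurable (Hk k) := by
    intro k
    apply Measurable.div_const
    exact Finset.measurable_sum _ fun i hi =>
      gmeas _ (hmem k i (Finset.mem_range.1 hi))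
  have htend : ∀ᵐ ω ∂P, Tendsto (fun k => Hk k ω) atTop (nhds (H ω)) := by
    filter_upwards [hcont] with ω hω
    have hfc : ContinuousOn (fun u => g u ω) (Set.Icc 0 T) := by
      apply Real.continuous_exp.comp_continuousOn
      apply ContinuousOn.add
      · exact (Continuous.continuousOn (by continuity))
      · exact (continuousOn_const.mul (hω.sub continuousOn_const))
    have := riemann_sum_tendsto hT hfc
    rw [hH]
    exact this
  have hae : AEMeasurable H P :=
    aemeasurable_of_tendsto_metrizable_ae atTop (fun k => (Hkmeas k).aemeasurable) htend
  have hasm : AEStronglyMeasurable H P := hae.aestronglyMeasurable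
  have hpos : ∀ ω, 0 ≤ H ω := by
    intro ω
    rw [hH]
    apply mul_nonneg (by positivity)
    exact intervalIntegral.integral_nonneg hT.le fun u _ => Real.exp_nonneg _
  refine ⟨hasm, hpos, ?_⟩
  -- moment bounds
  set C : ℕ → ℝ≥0∞ := fun n =>
    ENNReal.ofReal (Real.exp ((n : ℝ) * |a| * T + ((n : ℝ) * σ₀) ^ 2 * T / 2)) with hC
  have step1 : ∀ (n : ℕ) (s : ℝ), s ∈ Set.Icc (0:ℝ) T →
      ∫⁻ ω, ENNReal.ofReal (g s ω ^ n) ∂P ≤ C n := by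
    intro n s hs
    have hpt : ∀ ω, g s ω ^ n
        = Real.exp ((n : ℝ) * (a * (s - t))) * Real.exp (((n : ℝ) * σ₀) * (W s ω - W t ω)) := by
      intro ω
      rw [hg]
      rw [← Real.exp_nat_mul, ← Real.exp_add]
      congr 1
      ring
    simp_rw [hpt, ENNReal.ofReal_mul (Real.exp_nonneg _)]
    rw [lintegral_const_mul' _ _ ENNReal.ofReal_ne_top]
    calc ENNReal.ofReal (Real.exp ((n:ℝ) * (a * (s - t))))
          * ∫⁻ ω, ENNReal.ofReal (Real.exp (((n:ℝ) * σ₀) * (W s ω - W t ω))) ∂P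
        ≤ ENNReal.ofReal (Real.exp ((n:ℝ) * |a| * T))
          * ENNReal.ofReal (Real.exp (((n:ℝ) * σ₀) ^ 2 * T / 2)) := by
          apply mul_le_mul'
          · apply ENNReal.ofReal_le_ofReal
            apply Real.exp_le_exp.2
            have h1 : |s - t| ≤ T := by
              rw [abs_le]; constructor <;> [linarith [hs.1]; linarith [hs.2]]
            calc (n:ℝ) * (a * (s - t)) ≤ (n:ℝ) * |a * (s - t)| := by
                  apply mul_le_mul_of_nonneg_left (le_abs_self _) (Nat.cast_nonneg n)
              _ = (n:ℝ) * (|a| * |s - t|) := by rw [abs_mul]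
              _ ≤ (n:ℝ) * (|a| * T) := by
                  apply mul_le_mul_of_nonneg_left _ (Nat.cast_nonneg n)
                  exact mul_le_mul_of_nonneg_left h1 (abs_nonneg a)
              _ = (n:ℝ) * |a| * T := by ring
          · exact increment_exp_lintegral_le P ht htT.le hWmeas hgauss _ hs
      _ = C n := by
          rw [← ENNReal.ofReal_mul (Real.exp_nonneg _), ← Real.exp_add]
  have step2 : ∀ (n k : ℕ), ∫⁻ ω, ENNReal.ofReal (Hk k ω ^ n) ∂P ≤ C n := by
    intro n k
    have hCn1 : 1 ≤ C n := by
      rw [hC]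
      simp only
      rw [show (1 : ℝ≥0∞) = ENNReal.ofReal (Real.exp 0) by simp]
      apply ENNReal.ofReal_le_ofReal
      apply Real.exp_le_exp.2
      positivity
    rcases n with _ | n'
    · simp only [pow_zero, ENNReal.ofReal_one, lintegral_one, measure_univ, mul_one]
      exact hCn1
    -- n = n' + 1 : use Jensen
    have hk1 : (0:ℝ) < (k:ℝ) + 1 := by positivity
    have hjensen : ∀ ω, Hk k ω ^ (n' + 1)
        ≤ (∑ i ∈ Finset.range (k + 1), g ((i:ℝ) * T / ((k:ℝ) + 1)) ω ^ (n' + 1))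
            / ((k:ℝ) + 1) := by
      intro ω
      have hnn : ∀ i ∈ Finset.range (k + 1),
          0 ≤ g ((i:ℝ) * T / ((k:ℝ) + 1)) ω := fun i _ => Real.exp_nonneg _
      have := pow_sum_div_card_le_sum_pow (s := Finset.range (k+1))
        (f := fun i => g ((i:ℝ) * T / ((k:ℝ) + 1)) ω) hnn n'
      rw [Finset.card_range] at this
      rw [hHk]
      simp only
      rw [div_pow, div_le_div_iff₀ (by positivity) hk1]
      push_cast at this ⊢
      rw [div_le_iff₀ (by positivity)] at this
      calc (∑ i ∈ Finset.range (k + 1), g ((i:ℝ) * T / ((k:ℝ) + 1)) ω) ^ (n' + 1) * ((k:ℝ) + 1)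
          ≤ (∑ i ∈ Finset.range (k + 1), g ((i:ℝ) * T / ((k:ℝ) + 1)) ω ^ (n' + 1))
            * ((k:ℝ) + 1) ^ n' * ((k:ℝ) + 1) := by nlinarith [this]
        _ = _ := by ring
    calc ∫⁻ ω, ENNReal.ofReal (Hk k ω ^ (n' + 1)) ∂P
        ≤ ∫⁻ ω, ENNReal.ofReal ((∑ i ∈ Finset.range (k + 1),
              g ((i:ℝ) * T / ((k:ℝ) + 1)) ω ^ (n' + 1)) / ((k:ℝ) + 1)) ∂P := by
          exact lintegral_mono fun ω => ENNReal.ofReal_le_ofReal (hjensen ω)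
      _ = ∫⁻ ω, (∑ i ∈ Finset.range (k + 1),
              ENNReal.ofReal (g ((i:ℝ) * T / ((k:ℝ) + 1)) ω ^ (n' + 1)))
            * (ENNReal.ofReal ((k:ℝ) + 1))⁻¹ ∂P := by
          apply lintegral_congr fun ω => ?_
          rw [ENNReal.ofReal_div_of_pos hk1, ENNReal.ofReal_sum_of_nonneg
            (fun i _ => by positivity), div_eq_mul_inv]
      _ = (∑ i ∈ Finset.range (k + 1), ∫⁻ ω,
            ENNReal.ofReal (g ((i:ℝ) * T / ((k:ℝ) + 1)) ω ^ (n' + 1)) ∂P)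
            * (ENNReal.ofReal ((k:ℝ) + 1))⁻¹ := by
          rw [lintegral_mul_const' _ _ (by simp [hk1])]
          congr 1
          exact lintegral_finset_sum _ fun i hi => by
            exact (ENNReal.measurable_ofReal.comp
              (((gmeas _ (hmem k i (Finset.mem_range.1 hi))).pow_const _)))
      _ ≤ (((k:ℕ) + 1 : ℕ) • C (n' + 1)) * (ENNReal.ofReal ((k:ℝ) + 1))⁻¹ := by
          apply mul_le_mul_left
          calc _ ≤ ∑ i ∈ Finset.range (k + 1), C (n' + 1) :=
                Finset.sum_le_sum fun i hi => step1 _ _ (hmem k i (Finset.mem_range.1 hi))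
            _ = _ := by rw [Finset.sum_const, Finset.card_range]
      _ ≤ C (n' + 1) := by
          rw [nsmul_eq_mul]
          have h1 : ENNReal.ofReal ((k:ℝ) + 1) = (((k + 1 : ℕ) : ℝ≥0∞)) := by
            rw [show ((k:ℝ) + 1) = ((k + 1 : ℕ) : ℝ) by push_cast; ring,
              ENNReal.ofReal_natCast]
          rw [h1, mul_comm (((k + 1 : ℕ) : ℝ≥0∞)) (C (n' + 1)), mul_assoc,
            ENNReal.mul_inv_cancel (by exact_mod_cast Nat.succ_ne_zero k)
              (ENNReal.natCast_ne_top _), mul_one]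
  -- step 3: moment bound for H itself via Fatou
  have step3 : ∀ n : ℕ, ∫⁻ ω, ENNReal.ofReal (H ω ^ n) ∂P ≤ C n := by
    intro n
    have hlim : ∀ᵐ ω ∂P, ENNReal.ofReal (H ω ^ n)
        = liminf (fun k => ENNReal.ofReal (Hk k ω ^ n)) atTop := by
      filter_upwards [htend] with ω hω
      have : Tendsto (fun k => ENNReal.ofReal (Hk k ω ^ n)) atTop
          (nhds (ENNReal.ofReal (H ω ^ n))) := by
        exact (ENNReal.continuous_ofReal.tendsto _).comp
          (((continuous_pow n).tendsto _).comp hω)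
      exact this.liminf_eq.symm
    calc ∫⁻ ω, ENNReal.ofReal (H ω ^ n) ∂P
        = ∫⁻ ω, liminf (fun k => ENNReal.ofReal (Hk k ω ^ n)) atTop ∂P :=
          lintegral_congr_ae hlim
      _ ≤ liminf (fun k => ∫⁻ ω, ENNReal.ofReal (Hk k ω ^ n) ∂P) atTop :=
          lintegral_liminf_le fun k =>
            ENNReal.measurable_ofReal.comp ((Hkmeas k).pow_const n)
      _ ≤ liminf (fun _ : ℕ => C n) atTop :=
          Filter.liminf_le_liminf (Filter.Eventually.of_forall fun k => step2 n k)
      _ = C n := Filter.liminf_const _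
  -- step 4: integrability of (1+H)^n
  intro n
  constructor
  · exact (((continuous_const.add continuous_id).pow n).comp_aestronglyMeasurable hasm)
  · rw [HasFiniteIntegral]
    have hnorm : ∀ ω, ‖(1 + H ω) ^ n‖ₑ = ENNReal.ofReal ((1 + H ω) ^ n) := by
      intro ω
      exact Real.enorm_eq_ofReal (pow_nonneg (by linarith [hpos ω]) n)
    simp_rw [hnorm]
    have hptb : ∀ ω, ENNReal.ofReal ((1 + H ω) ^ n)
        ≤ ENNReal.ofReal (2 ^ n) * (1 + ENNReal.ofReal (H ω ^ n)) := by
      intro ω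
      have hx := hpos ω
      have hreal : (1 + H ω) ^ n ≤ 2 ^ n * (1 + H ω ^ n) := by
        rcases le_total (H ω) 1 with h | h
        · have h1 : (1 + H ω) ^ n ≤ 2 ^ n := by
            apply pow_le_pow_left₀ (by linarith) (by linarith)
          nlinarith [pow_nonneg hx n, pow_pos (show (0:ℝ) < 2 by norm_num) n]
        · have h1 : (1 + H ω) ^ n ≤ (2 * H ω) ^ n := by
            apply pow_le_pow_left₀ (by linarith) (by linarith)
          rw [mul_pow] at h1
          nlinarith [pow_nonneg hx n, pow_pos (show (0:ℝ) < 2 by norm_num) n]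
      calc ENNReal.ofReal ((1 + H ω) ^ n) ≤ ENNReal.ofReal (2 ^ n * (1 + H ω ^ n)) :=
            ENNReal.ofReal_le_ofReal hreal
        _ = ENNReal.ofReal (2 ^ n) * ENNReal.ofReal (1 + H ω ^ n) := by
            rw [ENNReal.ofReal_mul (by positivity)]
        _ ≤ ENNReal.ofReal (2 ^ n) * (1 + ENNReal.ofReal (H ω ^ n)) := by
            apply mul_le_mul_right
            rw [ENNReal.ofReal_add (by norm_num) (by positivity)]
            simp
    calc ∫⁻ ω, ENNReal.ofReal ((1 + H ω) ^ n) ∂P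
        ≤ ∫⁻ ω, ENNReal.ofReal (2 ^ n) * (1 + ENNReal.ofReal (H ω ^ n)) ∂P :=
          lintegral_mono hptb
      _ = ENNReal.ofReal (2 ^ n) * ∫⁻ ω, (1 + ENNReal.ofReal (H ω ^ n)) ∂P :=
          lintegral_const_mul' _ _ ENNReal.ofReal_ne_top
      _ = ENNReal.ofReal (2 ^ n) * (1 + ∫⁻ ω, ENNReal.ofReal (H ω ^ n) ∂P) := by
          congr 1
          rw [lintegral_add_left' aemeasurable_const]
          simp
      _ < ⊤ := by
          apply ENNReal.mul_lt_top ENNReal.ofReal_lt_top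
          have := step3 n
          have hCfin : C n < ⊤ := ENNReal.ofReal_lt_top
          exact lt_of_le_of_lt (add_le_add le_rfl (step3 n))
            (by exact ENNReal.add_lt_top.2 ⟨ENNReal.one_lt_top, hCfin⟩)

/-- The Black–Scholes Asian option price `V₀(x) = e^{−r(T−t)} E[φ(xH)]`, with
`H = (1/T)∫₀^T exp((r − σ₀²/2)(u−t) + σ₀(W_u − W_t)) du`, is twice differentiable
on `(0, ∞)` with `V₀''(x) = e^{−r(T−t)} E[φ''(xH) H²]`, and `|V₀''(x)| ≤ K₃(1 + x^m)`
for some constant `K₃ ≥ 0`, whenever the payoff `φ` is `C²` with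
`|φ| + |φ'| + |φ''|` of polynomial growth of order `m`. -/
theorem asian_bs_price_second_deriv
    {Ω : Type*} [MeasurableSpace Ω] (P : Measure Ω) [IsProbabilityMeasure P]
    (T r σ₀ t : ℝ) (hσ₀ : 0 < σ₀) (ht : 0 ≤ t) (htT : t < T)
    (W : ℝ → Ω → ℝ) (hW : IsStandardBrownianMotion P T W)
    (H : Ω → ℝ)
    (hH : H = fun ω => (1 / T) * ∫ u in (0 : ℝ)..T,
      Real.exp ((r - σ₀ ^ 2 / 2) * (u - t) + σ₀ * (W u ω - W t ω)))
    (φ : ℝ → ℝ) (K m : ℝ) (hK : 0 ≤ K) (hm : 0 ≤ m)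
    (hφ : ContDiff ℝ 2 φ)
    (hgrowth : ∀ z : ℝ, |φ z| + |deriv φ z| + |deriv (deriv φ) z| ≤ K * (1 + |z| ^ m))
    (V₀ : ℝ → ℝ)
    (hV₀ : V₀ = fun x => Real.exp (-(r * (T - t))) * ∫ ω, φ (x * H ω) ∂P) :
    (∀ x ∈ Set.Ioi (0 : ℝ), DifferentiableAt ℝ V₀ x) ∧
    (∀ x ∈ Set.Ioi (0 : ℝ), HasDerivAt (deriv V₀)
      (Real.exp (-(r * (T - t))) * ∫ ω, deriv (deriv φ) (x * H ω) * H ω ^ 2 ∂P) x) ∧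
    ∃ K₃ : ℝ, 0 ≤ K₃ ∧ ∀ x : ℝ, 0 < x →
      |Real.exp (-(r * (T - t))) * ∫ ω, deriv (deriv φ) (x * H ω) * H ω ^ 2 ∂P|
        ≤ K₃ * (1 + x ^ m) := by
  obtain ⟨hasm, hpos, hint⟩ := H_props P T t σ₀ (r - σ₀ ^ 2 / 2) ht htT W
    hW.measurable hW.continuous_paths hW.gaussian_increments H hH
  set c : ℝ := Real.exp (-(r * (T - t))) with hc
  have hc0 : 0 < c := Real.exp_pos _
  set n : ℕ := ⌈m⌉₊ with hn
  -- smoothness facts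
  have hφ1 : Differentiable ℝ φ := hφ.differentiable (by norm_num)
  have h2 : ContDiff ℝ ((1 : ℕ) + 1) φ := by norm_num; exact hφ
  have hφd : ContDiff ℝ (1 : ℕ) (deriv φ) := (contDiff_succ_iff_deriv.mp h2).2.2
  have hφ1' : Differentiable ℝ (deriv φ) := hφd.differentiable (by norm_num)
  have hcont1 : Continuous (deriv φ) := hφ1'.continuous
  have hcont2 : Continuous (deriv (deriv φ)) := hφd.continuous_deriv le_rfl
  -- growth facts
  have habs0 : ∀ z, |φ z| ≤ K * (1 + |z| ^ m) := fun z => by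
    have := hgrowth z; have h1 := abs_nonneg (deriv φ z)
    have h2 := abs_nonneg (deriv (deriv φ) z); linarith
  have habs1 : ∀ z, |deriv φ z| ≤ K * (1 + |z| ^ m) := fun z => by
    have := hgrowth z; have h1 := abs_nonneg (φ z)
    have h2 := abs_nonneg (deriv (deriv φ) z); linarith
  have habs2 : ∀ z, |deriv (deriv φ) z| ≤ K * (1 + |z| ^ m) := fun z => by
    have := hgrowth z; have h1 := abs_nonneg (φ z)
    have h2 := abs_nonneg (deriv φ z); linarith
  have hrpow : ∀ z : ℝ, 0 ≤ z → z ^ m ≤ 1 + z ^ n := by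
    intro z hz
    rcases le_total z 1 with h | h
    · have : z ^ m ≤ 1 := Real.rpow_le_one hz h hm
      have : (0:ℝ) ≤ z ^ n := pow_nonneg hz n
      linarith [Real.rpow_le_one hz h hm]
    · have h1 : z ^ m ≤ z ^ (n : ℝ) :=
        Real.rpow_le_rpow_of_exponent_le h (Nat.le_ceil m)
      rw [Real.rpow_natCast] at h1
      linarith
  have hpoly : ∀ (ψ : ℝ → ℝ), (∀ z, |ψ z| ≤ K * (1 + |z| ^ m)) →
      ∀ x y : ℝ, 0 ≤ y → |ψ (x * y)| ≤ 3 * K * ((1 + |x|) ^ n * (1 + y) ^ n) := by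
    intro ψ hψ x y hy
    have h1 : |ψ (x * y)| ≤ K * (1 + |x * y| ^ m) := hψ _
    have h2 : |x * y| ^ m ≤ 1 + |x * y| ^ n := hrpow _ (abs_nonneg _)
    have h3 : |x * y| ^ n ≤ ((1 + |x|) * (1 + y)) ^ n := by
      apply pow_le_pow_left₀ (abs_nonneg _)
      rw [abs_mul, abs_of_nonneg hy]
      nlinarith [abs_nonneg x, abs_nonneg y]
    have h4 : (1:ℝ) ≤ ((1 + |x|) * (1 + y)) ^ n := by
      apply one_le_pow₀
      nlinarith [abs_nonneg x]
    rw [mul_pow] at h3 h4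
    nlinarith [abs_nonneg x, abs_nonneg y]
  -- measurability of the integrands
  have aesm0 : ∀ x : ℝ, AEStronglyMeasurable (fun ω => φ (x * H ω)) P := fun x =>
    (hφ.continuous.comp (continuous_const.mul continuous_id)).comp_aestronglyMeasurable hasm
  have aesm1 : ∀ x : ℝ, AEStronglyMeasurable (fun ω => deriv φ (x * H ω) * H ω) P := fun x =>
    ((hcont1.comp (continuous_const.mul continuous_id)).mul
      continuous_id).comp_aestronglyMeasurable hasm
  have aesm2 : ∀ x : ℝ,
      AEStronglyMeasurable (fun ω => deriv (deriv φ) (x * H ω) * H ω ^ 2) P := fun x =>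
    ((hcont2.comp (continuous_const.mul continuous_id)).mul
      (continuous_id.pow 2)).comp_aestronglyMeasurable hasm
  -- pointwise derivatives
  have hd1 : ∀ (y x : ℝ), HasDerivAt (fun x => φ (x * y)) (deriv φ (x * y) * y) x :=
    fun y x => ((hφ1 (x * y)).hasDerivAt).comp x (hasDerivAt_mul_const y)
  have hd2 : ∀ (y x : ℝ), HasDerivAt (fun x => deriv φ (x * y) * y)
      (deriv (deriv φ) (x * y) * y ^ 2) x := by
    intro y x
    have h1 : HasDerivAt (deriv φ) (deriv (deriv φ) (x * y)) (x * y) := (hφ1' (x * y)).hasDerivAt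
    have h0 := h1.comp x (hasDerivAt_mul_const y)
    have := h0.mul_const y
    rw [show deriv (deriv φ) (x * y) * y ^ 2 = deriv (deriv φ) (x * y) * y * y by ring]
    exact this
  -- ball facts
  have hball : ∀ x₀ : ℝ, 0 < x₀ → ∀ x ∈ Metric.ball x₀ x₀, 0 < x ∧ |x| ≤ 2 * x₀ := by
    intro x₀ hx₀ x hx
    rw [Metric.mem_ball, Real.dist_eq, abs_lt] at hx
    constructor
    · linarith [hx.1]
    · rw [abs_le]; constructor <;> linarith [hx.1, hx.2]
  have hHnn : ∀ ω, (0:ℝ) ≤ 1 + H ω := fun ω => by linarith [hpos ω]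
  have hpowHn : ∀ (ω) (j : ℕ), (0:ℝ) ≤ (1 + H ω) ^ j := fun ω j => pow_nonneg (hHnn ω) j
  have hmul3 : ∀ A A' B B' : ℝ, A ≤ A' → 0 ≤ A → B ≤ B' → 0 ≤ B →
      3 * K * (A * B) ≤ 3 * K * A' * B' := by
    intro A A' B B' h1 h2 h3 h4
    have hAB : A * B ≤ A' * B' := mul_le_mul h1 h3 h4 (le_trans h2 h1)
    calc 3 * K * (A * B) ≤ 3 * K * (A' * B') :=
          mul_le_mul_of_nonneg_left hAB (by linarith)
      _ = 3 * K * A' * B' := by ring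
  have stepA : ∀ x₀ : ℝ, 0 < x₀ →
      Integrable (fun ω => deriv φ (x₀ * H ω) * H ω) P ∧
      HasDerivAt (fun x => ∫ ω, φ (x * H ω) ∂P)
        (∫ ω, deriv φ (x₀ * H ω) * H ω ∂P) x₀ := by
    intro x₀ hx₀
    refine hasDerivAt_integral_of_dominated_loc_of_deriv_le
      (F := fun x ω => φ (x * H ω)) (F' := fun x ω => deriv φ (x * H ω) * H ω)
      (bound := fun ω => 3 * K * (1 + 2 * x₀) ^ n * (1 + H ω) ^ (n + 1)) (Metric.ball_mem_nhds x₀ hx₀)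
      (Eventually.of_forall fun x => aesm0 x) ?_ (aesm1 x₀) ?_
      ((hint (n + 1)).const_mul _)
      (Eventually.of_forall fun ω x _ => hd1 (H ω) x)
    · -- Integrable (fun ω => φ (x₀ * H ω))
      apply Integrable.mono' (((hint n).const_mul (3 * K * (1 + 2 * x₀) ^ n))) (aesm0 x₀)
      apply Eventually.of_forall fun ω => ?_
      rw [Real.norm_eq_abs]
      calc |φ (x₀ * H ω)| ≤ 3 * K * ((1 + |x₀|) ^ n * (1 + H ω) ^ n) :=
            hpoly φ habs0 x₀ (H ω) (hpos ω)
        _ ≤ 3 * K * (1 + 2 * x₀) ^ n * (1 + H ω) ^ n :=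
            hmul3 _ _ _ _
              (pow_le_pow_left₀ (by positivity)
                (by rw [abs_of_pos hx₀]; linarith) n)
              (by positivity) le_rfl (hpowHn ω n)
    · apply Eventually.of_forall fun ω => ?_
      intro x hx
      obtain ⟨hx0, hx2⟩ := hball x₀ hx₀ x hx
      rw [Real.norm_eq_abs, abs_mul, abs_of_nonneg (hpos ω)]
      have e1 : (1 + |x|) ^ n ≤ (1 + 2 * x₀) ^ n :=
        pow_le_pow_left₀ (by positivity) (by linarith) n
      have eB : (1 + H ω) ^ n * H ω ≤ (1 + H ω) ^ (n + 1) := by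
        rw [pow_succ]
        exact mul_le_mul_of_nonneg_left (by linarith [hpos ω]) (hpowHn ω n)
      calc |deriv φ (x * H ω)| * H ω
          ≤ 3 * K * ((1 + |x|) ^ n * (1 + H ω) ^ n) * H ω :=
            mul_le_mul_of_nonneg_right (hpoly _ habs1 x (H ω) (hpos ω)) (hpos ω)
        _ = 3 * K * ((1 + |x|) ^ n * ((1 + H ω) ^ n * H ω)) := by ring
        _ ≤ 3 * K * (1 + 2 * x₀) ^ n * (1 + H ω) ^ (n + 1) :=
            hmul3 _ _ _ _ e1 (by positivity) eB
              (mul_nonneg (hpowHn ω n) (hpos ω))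
  -- second dominated-derivative step
  have stepB : ∀ x₀ : ℝ, 0 < x₀ →
      Integrable (fun ω => deriv (deriv φ) (x₀ * H ω) * H ω ^ 2) P ∧
      HasDerivAt (fun x => ∫ ω, deriv φ (x * H ω) * H ω ∂P)
        (∫ ω, deriv (deriv φ) (x₀ * H ω) * H ω ^ 2 ∂P) x₀ := by
    intro x₀ hx₀
    refine hasDerivAt_integral_of_dominated_loc_of_deriv_le
      (F := fun x ω => deriv φ (x * H ω) * H ω)
      (F' := fun x ω => deriv (deriv φ) (x * H ω) * H ω ^ 2)
      (bound := fun ω => 3 * K * (1 + 2 * x₀) ^ n * (1 + H ω) ^ (n + 2)) (Metric.ball_mem_nhds x₀ hx₀)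
      (Eventually.of_forall fun x => aesm1 x) (stepA x₀ hx₀).1 (aesm2 x₀) ?_
      ((hint (n + 2)).const_mul _)
      (Eventually.of_forall fun ω x _ => hd2 (H ω) x)
    apply Eventually.of_forall fun ω => ?_
    intro x hx
    obtain ⟨hx0, hx2⟩ := hball x₀ hx₀ x hx
    rw [Real.norm_eq_abs, abs_mul, abs_of_nonneg (sq_nonneg (H ω))]
    have e1 : (1 + |x|) ^ n ≤ (1 + 2 * x₀) ^ n :=
      pow_le_pow_left₀ (by positivity) (by linarith) n
    have eB : (1 + H ω) ^ n * H ω ^ 2 ≤ (1 + H ω) ^ (n + 2) := by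
      rw [pow_add]
      exact mul_le_mul_of_nonneg_left (by nlinarith [hpos ω]) (hpowHn ω n)
    calc |deriv (deriv φ) (x * H ω)| * H ω ^ 2
        ≤ 3 * K * ((1 + |x|) ^ n * (1 + H ω) ^ n) * H ω ^ 2 :=
          mul_le_mul_of_nonneg_right (hpoly _ habs2 x (H ω) (hpos ω)) (sq_nonneg _)
      _ = 3 * K * ((1 + |x|) ^ n * ((1 + H ω) ^ n * H ω ^ 2)) := by ring
      _ ≤ 3 * K * (1 + 2 * x₀) ^ n * (1 + H ω) ^ (n + 2) :=
          hmul3 _ _ _ _ e1 (by positivity) eB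
            (mul_nonneg (hpowHn ω n) (sq_nonneg _))
  -- conclusions
  have hV1 : ∀ x : ℝ, 0 < x → HasDerivAt V₀ (c * ∫ ω, deriv φ (x * H ω) * H ω ∂P) x := by
    intro x hx
    rw [hV₀]
    exact ((stepA x hx).2).const_mul c
  refine ⟨fun x hx => (hV1 x hx).differentiableAt, fun x hx => ?_, ?_⟩
  · -- second derivative
    have hx : 0 < x := hx
    have hev : deriv V₀ =ᶠ[nhds x] fun y => c * ∫ ω, deriv φ (y * H ω) * H ω ∂P := by
      filter_upwards [isOpen_Ioi.mem_nhds (show x ∈ Set.Ioi (0:ℝ) from hx)] with y hy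
      exact (hV1 y hy).deriv
    exact (((stepB x hx).2).const_mul c).congr_of_eventuallyEq hev
  · -- the polynomial bound
    set B : ℝ := ∫ ω, (1 + H ω) ^ (n + 2) ∂P with hB
    have hB0 : 0 ≤ B := integral_nonneg fun ω => pow_nonneg (by linarith [hpos ω]) _
    refine ⟨c * (2 * K) * B, mul_nonneg (mul_nonneg hc0.le (by linarith)) hB0, ?_⟩
    intro x hx
    have hintx : Integrable (fun ω => deriv (deriv φ) (x * H ω) * H ω ^ 2) P :=
      (stepB x hx).1
    have hptb : ∀ ω, |deriv (deriv φ) (x * H ω) * H ω ^ 2|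
        ≤ 2 * K * (1 + x ^ m) * (1 + H ω) ^ (n + 2) := by
      intro ω
      have h0 := hpos ω
      have h1 : |deriv (deriv φ) (x * H ω)| ≤ K * (1 + |x * H ω| ^ m) := habs2 _
      have h2 : |x * H ω| ^ m = x ^ m * H ω ^ m := by
        rw [abs_mul, abs_of_pos hx, abs_of_nonneg h0, Real.mul_rpow hx.le h0]
      have h3 : H ω ^ m ≤ 1 + H ω ^ n := hrpow _ h0
      have h4 : H ω ^ 2 ≤ (1 + H ω) ^ (n + 2) := by
        calc H ω ^ 2 ≤ (1 + H ω) ^ 2 := by nlinarith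
          _ ≤ (1 + H ω) ^ (n + 2) := by
            apply pow_le_pow_right₀ (by linarith) (by omega)
      have h5 : H ω ^ (n + 2) ≤ (1 + H ω) ^ (n + 2) := by
        apply pow_le_pow_left₀ h0; linarith
      have h6 : H ω ^ n * H ω ^ 2 = H ω ^ (n + 2) := by rw [← pow_add]
      have hxm : (0:ℝ) ≤ x ^ m := Real.rpow_nonneg hx.le m
      have hHm : (0:ℝ) ≤ H ω ^ m := Real.rpow_nonneg h0 m
      rw [abs_mul, abs_of_nonneg (sq_nonneg (H ω))]
      calc |deriv (deriv φ) (x * H ω)| * H ω ^ 2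
          ≤ K * (1 + x ^ m * H ω ^ m) * H ω ^ 2 := by
            apply mul_le_mul_of_nonneg_right _ (sq_nonneg _)
            rw [← h2]; exact h1
        _ ≤ K * (1 + x ^ m * (1 + H ω ^ n)) * H ω ^ 2 := by
            apply mul_le_mul_of_nonneg_right _ (sq_nonneg _)
            apply mul_le_mul_of_nonneg_left _ hK
            nlinarith
        _ = K * H ω ^ 2 + K * x ^ m * H ω ^ 2 + K * x ^ m * (H ω ^ n * H ω ^ 2) := by ring
        _ ≤ K * (1 + H ω) ^ (n+2) + K * x ^ m * (1 + H ω) ^ (n+2)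
              + K * x ^ m * (1 + H ω) ^ (n+2) := by
            rw [h6]
            have := mul_le_mul_of_nonneg_left h4 hK
            have h7 := mul_le_mul_of_nonneg_left h4 (mul_nonneg hK hxm)
            have h8 := mul_le_mul_of_nonneg_left h5 (mul_nonneg hK hxm)
            linarith
        _ ≤ 2 * K * (1 + x ^ m) * (1 + H ω) ^ (n + 2) := by
            have h9 : (0:ℝ) ≤ (1 + H ω) ^ (n+2) := by positivity
            nlinarith
    calc |c * ∫ ω, deriv (deriv φ) (x * H ω) * H ω ^ 2 ∂P|
        = c * |∫ ω, deriv (deriv φ) (x * H ω) * H ω ^ 2 ∂P| := by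
          rw [abs_mul, abs_of_pos hc0]
      _ ≤ c * ∫ ω, |deriv (deriv φ) (x * H ω) * H ω ^ 2| ∂P := by
          apply mul_le_mul_of_nonneg_left _ hc0.le
          exact
            norm_integral_le_integral_norm (μ := P)
              (fun ω => deriv (deriv φ) (x * H ω) * H ω ^ 2)
      _ ≤ c * ∫ ω, 2 * K * (1 + x ^ m) * (1 + H ω) ^ (n + 2) ∂P := by
          apply mul_le_mul_of_nonneg_left _ hc0.le
          apply integral_mono hintx.abs (((hint (n+2)).const_mul _)) hptb
      _ = c * (2 * K) * B * (1 + x ^ m) := by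
          rw [integral_const_mul]
          ring
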